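/- Let $p_1, \dots, p_n$ be i.i.d. random variables uniformly distributed on $[0,1]$, and let $p_{(1)} \le \cdots \le p_{(n)}$ be their order statistics. Then the Simes statistic $T = \min_{1 \le l \le n} p_{(l)} \cdot n / l$ satisfies $P(T \le \alpha) = \alpha$ for every $\alpha \in [0,1]$. -/

import Mathlib

open MeasureTheory ProbabilityTheory

namespace SimesAux

open Finset

/-- number of coordinates of `x` that are `≤ t` -/
noncomputable def cnt {k : ℕ} (x : Fin k → ℝ) (t : ℝ) : ℕ := ∑ i, if x i ≤ t then 1 else 0

lemma measurable_cnt {k : ℕ} (t : ℝ) : Measurable fun x : Fin k → ℝ => cnt x t := by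
  unfold cnt
  exact Finset.measurable_sum _ fun i _ =>
    Measurable.ite (measurableSet_le (measurable_pi_apply i) measurable_const)
      measurable_const measurable_const

lemma cnt_le {k : ℕ} (x : Fin k → ℝ) (t : ℝ) : cnt x t ≤ k := by
  calc cnt x t ≤ ∑ _i : Fin k, 1 := Finset.sum_le_sum fun i _ => by split <;> simp
  _ = k := by simp

lemma cnt_comp_equiv {k : ℕ} (x : Fin k → ℝ) (σ : Equiv.Perm (Fin k)) (t : ℝ) :
    cnt (x ∘ σ) t = cnt x t := by
  unfold cnt
  exact Fintype.sum_equiv σ _ _ fun i => rfl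

lemma cnt_succ {k : ℕ} (x : Fin (k + 1) → ℝ) (s : ℝ) :
    cnt x s = cnt (fun j : Fin k => x j.castSucc) s
      + if x (Fin.last k) ≤ s then 1 else 0 := by
  unfold cnt
  rw [Fin.sum_univ_castSucc]

lemma sorted_le_iff {k : ℕ} (x : Fin k → ℝ) (l : Fin k) (t : ℝ) :
    x (Tuple.sort x l) ≤ t ↔ (l : ℕ) + 1 ≤ cnt x t := by
  have hc : cnt x t = cnt (x ∘ Tuple.sort x) t := (cnt_comp_equiv x (Tuple.sort x) t).symm
  rw [hc]
  set g := x ∘ Tuple.sort x with hg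
  have hmono : Monotone g := Tuple.monotone_sort x
  have hcard : cnt g t = (univ.filter fun i => g i ≤ t).card := by
    unfold cnt; rw [Finset.card_filter]
  show g l ≤ t ↔ _
  constructor
  · intro h
    rw [hcard]
    calc (l : ℕ) + 1 = (Finset.Iic l).card := (Fin.card_Iic l).symm
    _ ≤ _ := Finset.card_le_card fun j hj => by
        simp only [Finset.mem_filter, Finset.mem_univ, true_and]
        exact le_trans (hmono (Finset.mem_Iic.mp hj)) h
  · intro h
    rw [hcard] at h
    by_contra hlt
    push_neg at hlt
    have hsub : (univ.filter fun i => g i ≤ t) ⊆ Finset.Iio l := by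
      intro j hj
      simp only [Finset.mem_filter, Finset.mem_univ, true_and] at hj
      rw [Finset.mem_Iio]
      by_contra hle
      push_neg at hle
      exact absurd (le_trans (hmono hle) hj) (not_le.mpr hlt)
    have h2 := Finset.card_le_card hsub
    rw [Fin.card_Iio] at h2
    omega

lemma null_eq_const {k : ℕ} (i : Fin k) (t : ℝ) :
    volume {x : Fin k → ℝ | x i = t} = 0 := by
  have h : {x : Fin k → ℝ | x i = t}
      = Set.pi Set.univ (fun j => if j = i then ({t} : Set ℝ) else Set.univ) := by
    ext x
    simp only [Set.mem_setOf_eq, Set.mem_pi, Set.mem_univ, true_implies]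
    constructor
    · intro h j
      by_cases hj : j = i
      · subst hj; simp [h]
      · simp [hj]
    · intro h
      have := h i
      simpa using this
  rw [h, volume_pi, Measure.pi_pi]
  apply Finset.prod_eq_zero (Finset.mem_univ i)
  simp

lemma null_eq_coord {k : ℕ} {i j : Fin k} (hij : i ≠ j) :
    volume {x : Fin k → ℝ | x i = x j} = 0 := by
  set φ : (Fin k → ℝ) →ₗ[ℝ] ℝ := (LinearMap.proj (R := ℝ) (φ := fun _ : Fin k => ℝ) i) - (LinearMap.proj j) with hφ
  have hker : {x : Fin k → ℝ | x i = x j} = ↑(LinearMap.ker φ) := by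
    ext x
    simp [hφ, LinearMap.mem_ker, sub_eq_zero]
  rw [hker]
  apply Measure.addHaar_submodule
  intro htop
  have h0 : φ (Pi.single i 1) = 0 := by
    rw [LinearMap.ker_eq_top.mp htop]; rfl
  have h1 : φ (Pi.single i 1) = 1 := by
    simp [hφ, Pi.single_apply, hij.symm]
  rw [h1] at h0
  exact one_ne_zero h0

/-- the "all Simes constraints fail" region inside the cube `[0,m]^k` -/
def Gset (k : ℕ) (c m : ℝ) : Set (Fin k → ℝ) :=
  {x | (∀ i, x i ∈ Set.Icc 0 m) ∧ ∀ l : Fin k, cnt x (c * ((l : ℕ) + 1)) ≤ (l : ℕ)}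

lemma measurableSet_Gset (k : ℕ) (c m : ℝ) : MeasurableSet (Gset k c m) := by
  have h : Gset k c m = (⋂ i, (fun x : Fin k → ℝ => x i) ⁻¹' Set.Icc 0 m)
      ∩ ⋂ l : Fin k, (fun x : Fin k → ℝ => cnt x (c * ((l : ℕ) + 1))) ⁻¹' Set.Iic (l : ℕ) := by
    ext x
    simp [Gset, Set.mem_iInter]
  rw [h]
  exact (MeasurableSet.iInter fun i => (measurable_pi_apply i) measurableSet_Icc).inter
    (MeasurableSet.iInter fun l => (measurable_cnt _) measurableSet_Iic)

lemma volume_strict {k : ℕ} (c t : ℝ) :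
    volume {y : Fin k → ℝ | (∀ i, 0 ≤ y i ∧ y i < t)
        ∧ ∀ l : Fin k, cnt y (c * ((l : ℕ) + 1)) ≤ (l : ℕ)}
      = volume (Gset k c t) := by
  apply le_antisymm
  · apply measure_mono
    rintro y ⟨h1, h2⟩
    exact ⟨fun i => ⟨(h1 i).1, (h1 i).2.le⟩, h2⟩
  · calc volume (Gset k c t)
        ≤ volume ({y : Fin k → ℝ | (∀ i, 0 ≤ y i ∧ y i < t)
            ∧ ∀ l : Fin k, cnt y (c * ((l : ℕ) + 1)) ≤ (l : ℕ)}
            ∪ ⋃ i, {y : Fin k → ℝ | y i = t}) := by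
          apply measure_mono
          rintro y ⟨h1, h2⟩
          by_cases hy : ∀ i, y i < t
          · exact Or.inl ⟨fun i => ⟨(h1 i).1, hy i⟩, h2⟩
          · push_neg at hy
            obtain ⟨i, hi⟩ := hy
            exact Or.inr (Set.mem_iUnion.mpr ⟨i, le_antisymm (h1 i).2 hi⟩)
      _ ≤ volume {y : Fin k → ℝ | (∀ i, 0 ≤ y i ∧ y i < t)
            ∧ ∀ l : Fin k, cnt y (c * ((l : ℕ) + 1)) ≤ (l : ℕ)}
          + volume (⋃ i, {y : Fin k → ℝ | y i = t}) := measure_union_le _ _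
      _ = _ := by
          rw [measure_iUnion_null fun i => null_eq_const i t, add_zero]

end SimesAux

namespace SimesAux

set_option maxHeartbeats 1000000 in
lemma Gvol (k : ℕ) : ∀ (c m : ℝ), 0 ≤ c → c * k ≤ m →
    volume (Gset k c m) = ENNReal.ofReal (m ^ k - c * k * m ^ (k - 1)) := by
  induction k with
  | zero =>
    intro c m _ _
    have h0 : Gset 0 c m = Set.univ := by
      ext x
      simp only [Gset, Set.mem_setOf_eq, Set.mem_univ, iff_true]
      exact ⟨fun i => i.elim0, fun l => l.elim0⟩
    rw [h0, volume_pi, Measure.pi_univ]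
    simp
  | succ k ih =>
    intro c m hc hm
    push_cast at hm
    set a := c * ((k : ℝ) + 1) with ha_def
    have ha0 : 0 ≤ a := by positivity
    have ham : a ≤ m := hm
    have hm0 : 0 ≤ m := le_trans ha0 ham
    have hck : c * k ≤ a := by
      rw [ha_def]
      nlinarith [hc]
    -- the sets
    set G := Gset (k + 1) c m with hG
    have hGm : MeasurableSet G := measurableSet_Gset _ _ _
    set M : Fin (k + 1) → Set (Fin (k + 1) → ℝ) :=
      fun j => {x | ∀ i, i ≠ j → x i < x j} with hM
    have hMm : ∀ j, MeasurableSet (M j) := by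
      intro j
      have h : M j = ⋂ i, ⋂ (_ : i ≠ j), {x : Fin (k + 1) → ℝ | x i < x j} := by
        ext x; simp [hM]
      rw [h]
      exact MeasurableSet.iInter fun i => MeasurableSet.iInter fun _ =>
        measurableSet_lt (measurable_pi_apply i) (measurable_pi_apply j)
    -- ties are null
    have htie : volume (G \ ⋃ j, G ∩ M j) = 0 := by
      have hsub : G \ (⋃ j, G ∩ M j) ⊆
          ⋃ (i : Fin (k + 1)) (j : Fin (k + 1)) (_ : i ≠ j),
            {x : Fin (k + 1) → ℝ | x i = x j} := by
        rintro x ⟨hxG, hxU⟩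
        obtain ⟨j, hj⟩ := Finite.exists_max x
        simp only [Set.mem_iUnion] at hxU ⊢
        push_neg at hxU
        have hxMj : x ∉ M j := fun hmem => hxU j ⟨hxG, hmem⟩
        simp only [hM, Set.mem_setOf_eq, not_forall] at hxMj
        obtain ⟨i, hij, hi⟩ := hxMj
        exact ⟨i, j, hij, le_antisymm (hj i) (not_lt.mp hi)⟩
      exact measure_mono_null hsub
        (measure_iUnion_null fun i => measure_iUnion_null fun j =>
          measure_iUnion_null fun hij => null_eq_coord hij)
    -- disjointness
    have hdisj : Pairwise (Function.onFun Disjoint fun j => G ∩ M j) := by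
      intro j j' hjj'
      simp only [Function.onFun, Set.disjoint_left]
      rintro x ⟨-, hxj⟩ ⟨-, hxj'⟩
      exact absurd (hxj' j hjj') (not_lt.mpr (hxj j' hjj'.symm).le)
    -- symmetry: all pieces have same volume
    have heq : ∀ j, volume (G ∩ M j) = volume (G ∩ M (Fin.last k)) := by
      intro j
      set σ : Equiv.Perm (Fin (k + 1)) := Equiv.swap j (Fin.last k) with hσ
      have hmp : MeasurePreserving (fun x : Fin (k + 1) → ℝ => x ∘ σ) volume volume := by
        have h := measurePreserving_piCongrLeft
          (fun _ : Fin (k + 1) => (volume : Measure ℝ)) σ.symm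
        have hcoe : ⇑(MeasurableEquiv.piCongrLeft (fun _ : Fin (k + 1) => ℝ) σ.symm)
            = fun x : Fin (k + 1) → ℝ => x ∘ σ := by
          ext x j'
          show (Equiv.piCongrLeft (fun _ : Fin (k + 1) => ℝ) σ.symm) x j' = x (σ j')
          have h2 := Equiv.piCongrLeft_apply_apply (fun _ : Fin (k + 1) => ℝ) σ.symm x (σ j')
          simpa using h2
        rw [hcoe] at h
        simpa [volume_pi] using h
      have hσlast : σ (Fin.last k) = j := Equiv.swap_apply_right j (Fin.last k)
      have hpre : G ∩ M j = (fun x : Fin (k + 1) → ℝ => x ∘ σ) ⁻¹' (G ∩ M (Fin.last k)) := by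
        ext x
        simp only [Set.mem_preimage, Set.mem_inter_iff]
        have hGiff : (x ∘ σ) ∈ G ↔ x ∈ G := by
          simp only [hG, Gset, Set.mem_setOf_eq, Function.comp]
          constructor
          · rintro ⟨h1, h2⟩
            refine ⟨fun i => ?_, fun l => ?_⟩
            · have := h1 (σ.symm i); simpa using this
            · have := h2 l
              rwa [cnt_comp_equiv] at this
          · rintro ⟨h1, h2⟩
            refine ⟨fun i => h1 (σ i), fun l => ?_⟩
            rw [cnt_comp_equiv]
            exact h2 l
        have hMiff : (x ∘ σ) ∈ M (Fin.last k) ↔ x ∈ M j := by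
          simp only [hM, Set.mem_setOf_eq, Function.comp]
          constructor
          · intro h i hij
            have hne : σ.symm i ≠ Fin.last k := by
              intro hcon
              apply hij
              have : i = σ (Fin.last k) := by rw [← hcon, Equiv.apply_symm_apply]
              rw [this, hσlast]
            have h2 := h (σ.symm i) hne
            rwa [Equiv.apply_symm_apply, hσlast] at h2
          · intro h i hil
            rw [hσlast]
            refine h (σ i) fun hcon => hil ?_
            have : σ i = σ (Fin.last k) := by rw [hcon, hσlast]
            exact σ.injective this
        rw [hGiff, hMiff]
      rw [hpre]
      exact hmp.measure_preimage ((hGm.inter (hMm _)).nullMeasurableSet)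
    -- sum decomposition
    have hsum : volume G = ((k + 1 : ℕ) : ENNReal) * volume (G ∩ M (Fin.last k)) := by
      have h1 : volume G = volume (⋃ j, G ∩ M j) := by
        apply le_antisymm
        · have hsub : G ⊆ (⋃ j, G ∩ M j) ∪ (G \ ⋃ j, G ∩ M j) := by
            intro x hx
            by_cases hx' : x ∈ ⋃ j, G ∩ M j
            · exact Or.inl hx'
            · exact Or.inr ⟨hx, hx'⟩
          calc volume G ≤ volume ((⋃ j, G ∩ M j) ∪ (G \ ⋃ j, G ∩ M j)) := measure_mono hsub
          _ ≤ volume (⋃ j, G ∩ M j) + volume (G \ ⋃ j, G ∩ M j) := measure_union_le _ _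
          _ = volume (⋃ j, G ∩ M j) := by rw [htie, add_zero]
        · exact measure_mono (Set.iUnion_subset fun j => Set.inter_subset_left)
      rw [h1, measure_iUnion hdisj fun j => hGm.inter (hMm j), tsum_fintype,
        Finset.sum_congr rfl fun j _ => heq j, Finset.sum_const, Finset.card_univ,
        Fintype.card_fin, nsmul_eq_mul]
    -- Fubini on the last coordinate
    set e := MeasurableEquiv.piFinSuccAbove (fun _ : Fin (k + 1) => ℝ) (Fin.last k) with he_def
    have he : ∀ x : Fin (k + 1) → ℝ,
        e x = (x (Fin.last k), fun j : Fin k => x ((Fin.last k).succAbove j)) := fun _ => rfl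
    set S' : Set (ℝ × (Fin k → ℝ)) := {q | q.1 ∈ Set.Ioc a m ∧ (∀ i, 0 ≤ q.2 i ∧ q.2 i < q.1)
      ∧ ∀ l : Fin k, cnt q.2 (c * ((l : ℕ) + 1)) ≤ (l : ℕ)} with hS'
    have hS'm : MeasurableSet S' := by
      have h : S' = (Prod.fst ⁻¹' Set.Ioc a m) ∩
          ((⋂ i : Fin k, ({q : ℝ × (Fin k → ℝ) | 0 ≤ q.2 i} ∩ {q | q.2 i < q.1})) ∩
            ⋂ l : Fin k, (fun q : ℝ × (Fin k → ℝ) => cnt q.2 (c * ((l : ℕ) + 1))) ⁻¹'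
              Set.Iic (l : ℕ)) := by
        ext q
        simp only [hS', Set.mem_setOf_eq, Set.mem_inter_iff, Set.mem_preimage, Set.mem_iInter,
          Set.mem_Iic]
      rw [h]
      refine (measurable_fst measurableSet_Ioc).inter (MeasurableSet.inter ?_ ?_)
      · exact MeasurableSet.iInter fun i =>
          (measurableSet_le measurable_const (measurable_snd.eval)).inter
            (measurableSet_lt (measurable_snd.eval) measurable_fst)
      · exact MeasurableSet.iInter fun l =>
          ((measurable_cnt _).comp measurable_snd) measurableSet_Iic
    have hsa : (Fin.last k).succAbove = Fin.castSucc := Fin.succAbove_last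
    have hSeq : G ∩ M (Fin.last k) = e ⁻¹' S' := by
      ext x
      rw [Set.mem_preimage, he x]
      simp only [hS', Set.mem_setOf_eq, hsa, Set.mem_inter_iff, hG, Gset, hM]
      constructor
      · rintro ⟨⟨hcube, hcnt⟩, hmax⟩
        have hxm := hcube (Fin.last k)
        have hta : a < x (Fin.last k) := by
          by_contra hle
          push_neg at hle
          have hall : ∀ i, x i ≤ a := by
            intro i
            by_cases hi : i = Fin.last k
            · rw [hi]; exact hle
            · exact le_of_lt (lt_of_lt_of_le (hmax i hi) hle)
          have hcnt_all : cnt x a = k + 1 := by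
            unfold cnt
            rw [Finset.sum_congr rfl fun i _ => if_pos (hall i)]
            simp
          have h3 := hcnt (Fin.last k)
          rw [show c * (((Fin.last k : Fin (k + 1)) : ℕ) + 1 : ℝ) = a by
            rw [Fin.val_last, ha_def]] at h3
          rw [Fin.val_last] at h3
          omega
        refine ⟨⟨hta, hxm.2⟩, fun j => ?_, fun l => ?_⟩
        · exact ⟨(hcube j.castSucc).1, hmax j.castSucc (Fin.castSucc_lt_last j).ne⟩
        · have h1 := hcnt l.castSucc
          rw [Fin.coe_castSucc, cnt_succ x] at h1
          omega
      · rintro ⟨hta, hy, hcnt⟩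
        have htm : x (Fin.last k) ≤ m := hta.2
        have hta' : a < x (Fin.last k) := hta.1
        have hmax : ∀ i, i ≠ Fin.last k → x i < x (Fin.last k) := by
          intro i hi
          obtain ⟨j, rfl⟩ := Fin.exists_castSucc_eq.2 hi
          exact (hy j).2
        refine ⟨⟨fun i => ?_, fun l => ?_⟩, hmax⟩
        · by_cases hi : i = Fin.last k
          · rw [hi]; exact ⟨le_trans ha0 hta'.le, htm⟩
          · obtain ⟨j, rfl⟩ := Fin.exists_castSucc_eq.2 hi
            exact ⟨(hy j).1, le_trans (hy j).2.le htm⟩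
        · rw [cnt_succ]
          by_cases hl : l = Fin.last k
          · subst hl
            rw [Fin.val_last]
            have hthr : c * ((k : ℝ) + 1) = a := by rw [ha_def]
            have hnot : ¬ x (Fin.last k) ≤ c * (((Fin.last k : Fin (k + 1)) : ℕ) + 1 : ℝ) := by
              rw [Fin.val_last, hthr]
              exact not_le.mpr hta'
            rw [Fin.val_last] at hnot
            rw [if_neg hnot, add_zero]
            exact cnt_le _ _
          · obtain ⟨l', rfl⟩ := Fin.exists_castSucc_eq.2 hl
            rw [Fin.coe_castSucc]
            have hthr : c * ((l' : ℕ) + 1 : ℝ) ≤ a := by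
              rw [ha_def]
              apply mul_le_mul_of_nonneg_left _ hc
              have := l'.is_lt
              push_cast
              exact by exact_mod_cast by linarith [show ((l' : ℕ) : ℝ) < (k : ℝ) from by exact_mod_cast this]
            have hnot : ¬ x (Fin.last k) ≤ c * ((l' : ℕ) + 1 : ℝ) :=
              not_le.mpr (lt_of_le_of_lt hthr hta')
            rw [if_neg hnot, add_zero]
            exact hcnt l'
    -- volume of the "last coordinate is max" piece
    have hSlast_vol : volume (G ∩ M (Fin.last k))
        = ∫⁻ t in Set.Ioc a m, ENNReal.ofReal (t ^ k - c * k * t ^ (k - 1)) := by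
      have hpres := measurePreserving_piFinSuccAbove
        (fun _ : Fin (k + 1) => (volume : Measure ℝ)) (Fin.last k)
      rw [hSeq]
      have h1 : volume (e ⁻¹' S') = ((volume : Measure ℝ).prod
          (Measure.pi fun _ : Fin k => (volume : Measure ℝ))) S' := by
        rw [volume_pi]
        exact hpres.measure_preimage hS'm.nullMeasurableSet
      rw [h1, show (Measure.pi fun _ : Fin k => (volume : Measure ℝ))
            = (volume : Measure (Fin k → ℝ)) from (volume_pi).symm,
        Measure.prod_apply hS'm, ← lintegral_indicator measurableSet_Ioc]
      apply lintegral_congr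
      intro t
      by_cases ht : t ∈ Set.Ioc a m
      · rw [Set.indicator_of_mem ht]
        have hslice : Prod.mk t ⁻¹' S' = {y : Fin k → ℝ | (∀ i, 0 ≤ y i ∧ y i < t)
            ∧ ∀ l : Fin k, cnt y (c * ((l : ℕ) + 1)) ≤ (l : ℕ)} := by
          ext y
          simp only [hS', Set.mem_preimage, Set.mem_setOf_eq, ht, true_and]
        rw [hslice, volume_strict, ih c t hc (le_trans hck ht.1.le)]
      · rw [Set.indicator_of_notMem ht]
        have hempty : Prod.mk t ⁻¹' S' = ∅ := by
          ext y
          simp only [hS', Set.mem_preimage, Set.mem_setOf_eq, Set.mem_empty_iff_false,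
            iff_false, not_and]
          intro h
          exact absurd h ht
        rw [hempty]
        simp
    -- the integral
    have hint : ∫⁻ t in Set.Ioc a m, ENNReal.ofReal (t ^ k - c * k * t ^ (k - 1))
        = ENNReal.ofReal ((m ^ (k + 1) - c * ((k : ℝ) + 1) * m ^ k) / ((k : ℝ) + 1)) := by
      have hf_cont : Continuous fun t : ℝ => t ^ k - c * k * t ^ (k - 1) :=
        (continuous_pow k).sub (continuous_const.mul (continuous_pow (k - 1)))
      have hnn : ∀ t ∈ Set.Ioc a m, 0 ≤ t ^ k - c * k * t ^ (k - 1) := by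
        intro t ht
        have ht0 : 0 ≤ t := le_trans ha0 ht.1.le
        have htck : c * k ≤ t := le_trans hck ht.1.le
        cases k with
        | zero => simp
        | succ k' =>
          have h1 : (0 : ℝ) ≤ t ^ k' * (t - c * ((k' : ℝ) + 1)) := by
            apply mul_nonneg (pow_nonneg ht0 _)
            push_cast at htck
            linarith
          have h2 : t ^ (k' + 1) - c * ((k' + 1 : ℕ) : ℝ) * t ^ ((k' + 1) - 1)
              = t ^ k' * (t - c * ((k' : ℝ) + 1)) := by
            simp only [Nat.add_sub_cancel]
            push_cast
            ring
          rw [h2]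
          exact h1
      rw [← ofReal_integral_eq_lintegral_ofReal (hf_cont.integrableOn_Ioc)
        ((ae_restrict_iff' measurableSet_Ioc).mpr (ae_of_all _ hnn))]
      congr 1
      rw [← intervalIntegral.integral_of_le ham]
      have hF : ∀ t : ℝ, HasDerivAt (fun s : ℝ => (s ^ (k + 1) - c * ((k : ℝ) + 1) * s ^ k)
          / ((k : ℝ) + 1)) (t ^ k - c * k * t ^ (k - 1)) t := by
        intro t
        have h1 : HasDerivAt (fun s : ℝ => s ^ (k + 1)) (((k : ℝ) + 1) * t ^ k) t := by
          have := hasDerivAt_pow (k + 1) t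
          simpa using this
        have h2 : HasDerivAt (fun s : ℝ => c * ((k : ℝ) + 1) * s ^ k)
            (c * ((k : ℝ) + 1) * ((k : ℝ) * t ^ (k - 1))) t := (hasDerivAt_pow k t).const_mul _
        have h3 := (h1.sub h2).div_const ((k : ℝ) + 1)
        refine h3.congr_deriv ?_
        have hk0 : ((k : ℝ) + 1) ≠ 0 := by positivity
        rw [div_eq_iff hk0]
        ring
      rw [intervalIntegral.integral_eq_sub_of_hasDerivAt (fun t _ => hF t)
        (hf_cont.intervalIntegrable a m)]
      have hFa : (a ^ (k + 1) - c * ((k : ℝ) + 1) * a ^ k) = 0 := by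
        rw [pow_succ, ha_def]
        ring
      rw [hFa, zero_div, sub_zero]
    -- put everything together
    rw [hsum, hSlast_vol, hint, ← ENNReal.ofReal_natCast (k + 1),
      ← ENNReal.ofReal_mul (by positivity)]
    congr 1
    have hk0 : ((k : ℝ) + 1) ≠ 0 := by positivity
    push_cast
    exact mul_div_cancel₀ _ hk0

end SimesAux

namespace SimesAux

lemma event_iff {n : ℕ} [NeZero n] (x : Fin n → ℝ) (α : ℝ) :
    (⨅ l : Fin n, x (Tuple.sort x l) * n / ((l : ℕ) + 1)) ≤ α
      ↔ ∃ l : Fin n, (l : ℕ) + 1 ≤ cnt x (α * ((l : ℕ) + 1) / n) := by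
  have hn : (0 : ℝ) < n := by
    have := Nat.pos_of_ne_zero (NeZero.ne n)
    exact_mod_cast this
  have key : ∀ l : Fin n, x (Tuple.sort x l) * n / ((l : ℕ) + 1) ≤ α
      ↔ (l : ℕ) + 1 ≤ cnt x (α * ((l : ℕ) + 1) / n) := by
    intro l
    have hl : (0 : ℝ) < (l : ℕ) + 1 := by positivity
    rw [div_le_iff₀ hl, ← sorted_le_iff, le_div_iff₀ hn]
  constructor
  · intro h
    obtain ⟨l0, hl0⟩ := Finite.exists_min fun l : Fin n =>
      x (Tuple.sort x l) * n / ((l : ℕ) + 1)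
    exact ⟨l0, (key l0).mp (le_trans (le_ciInf hl0) h)⟩
  · rintro ⟨l, hl⟩
    exact le_trans (ciInf_le (Set.finite_range _).bddBelow l) ((key l).mpr hl)

end SimesAux

set_option maxHeartbeats 2000000 in
open SimesAux in
/-- For `n` i.i.d. p-values uniform on `[0,1]`, the Simes statistic
`T = min_l p₍l₎ · n / l` satisfies `P(T ≤ α) = α` for every `α ∈ [0,1]`. -/
theorem stmt2 {Ω : Type*} [MeasurableSpace Ω] (μ : Measure Ω) [IsProbabilityMeasure μ]
    (n : ℕ) [NeZero n] (p : Fin n → Ω → ℝ)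
    (hmeas : ∀ i, Measurable (p i))
    (hiid : iIndepFun p μ)
    (hunif : ∀ i, Measure.map (p i) μ = volume.restrict (Set.Icc (0 : ℝ) 1))
    (α : ℝ) (hα : α ∈ Set.Icc (0 : ℝ) 1) :
    μ {ω | (⨅ l : Fin n,
        (fun i => p i ω) (Tuple.sort (fun i => p i ω) l) * n / ((l : ℕ) + 1)) ≤ α}
      = ENNReal.ofReal α := by
  obtain ⟨hα0, hα1⟩ := hα
  have hn : (n : ℝ) ≠ 0 := Nat.cast_ne_zero.mpr (NeZero.ne n)
  set X : Ω → (Fin n → ℝ) := fun ω i => p i ω with hX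
  have hXm : Measurable X := measurable_pi_lambda _ hmeas
  set E : Set (Fin n → ℝ) :=
    {x | ∃ l : Fin n, (l : ℕ) + 1 ≤ cnt x (α * ((l : ℕ) + 1) / n)} with hE
  have hEm : MeasurableSet E := by
    have h : E = ⋃ l : Fin n,
        (fun x : Fin n → ℝ => cnt x (α * ((l : ℕ) + 1) / n)) ⁻¹' Set.Ici ((l : ℕ) + 1) := by
      ext x
      simp [hE, Set.mem_iUnion]
    rw [h]
    exact MeasurableSet.iUnion fun l => (measurable_cnt _) measurableSet_Ici
  have hset : {ω | (⨅ l : Fin n,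
      (fun i => p i ω) (Tuple.sort (fun i => p i ω) l) * n / ((l : ℕ) + 1)) ≤ α}
      = X ⁻¹' E := by
    ext ω
    exact event_iff (n := n) (fun i => p i ω) α
  have hSF : ∀ _i : Fin n, SigmaFinite (volume.restrict (Set.Icc (0 : ℝ) 1)) :=
    fun _ => inferInstance
  have hprod : Measure.map X μ
      = Measure.pi fun _ : Fin n => volume.restrict (Set.Icc (0 : ℝ) 1) := by
    refine (Measure.pi_eq fun s hs => ?_).symm
    rw [Measure.map_apply hXm (MeasurableSet.univ_pi hs)]
    have hpre : X ⁻¹' Set.pi Set.univ s = ⋂ i, p i ⁻¹' s i := by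
      ext ω
      simp [hX, Set.mem_pi]
    rw [hpre]
    have h := hiid.measure_inter_preimage_eq_mul Finset.univ (fun i _ => hs i)
    simp only [Finset.mem_univ, Set.iInter_true] at h
    rw [h]
    refine Finset.prod_congr rfl fun i _ => ?_
    rw [← hunif i, Measure.map_apply (hmeas i) (hs i)]
  rw [hset, ← Measure.map_apply hXm hEm, hprod]
  have hprob : IsProbabilityMeasure (volume.restrict (Set.Icc (0 : ℝ) 1)) := by
    constructor
    simp [Real.volume_Icc]
  have hres : (Measure.pi fun _ : Fin n => volume.restrict (Set.Icc (0 : ℝ) 1))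
      = (volume : Measure (Fin n → ℝ)).restrict (Set.pi Set.univ fun _ => Set.Icc (0 : ℝ) 1) := by
    refine Measure.pi_eq fun s hs => ?_
    rw [Measure.restrict_apply (MeasurableSet.univ_pi hs), ← Set.pi_inter_distrib,
      volume_pi, Measure.pi_pi]
    exact Finset.prod_congr rfl fun i _ => (Measure.restrict_apply (hs i)).symm
  have hcompl : Eᶜ ∩ (Set.pi Set.univ fun _ : Fin n => Set.Icc (0 : ℝ) 1)
      = Gset n (α / n) 1 := by
    ext x
    simp only [Set.mem_inter_iff, Set.mem_compl_iff, hE, Set.mem_setOf_eq, not_exists, not_le,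
      Set.mem_pi, Set.mem_univ, true_implies, Gset]
    have hthr : ∀ l : Fin n, α * ((l : ℕ) + 1) / n = α / n * ((l : ℕ) + 1) := fun l =>
      mul_div_right_comm α ((l : ℕ) + 1) n
    constructor
    · rintro ⟨h1, h2⟩
      refine ⟨h2, fun l => ?_⟩
      have := h1 l
      rw [hthr l] at this
      omega
    · rintro ⟨h1, h2⟩
      refine ⟨fun l => ?_, h1⟩
      have := h2 l
      rw [hthr l]
      omega
  have hG := Gvol n (α / n) 1 (by positivity)
    (by rw [div_mul_cancel₀ _ hn]; exact hα1)
  have h1pow : (1 : ℝ) ^ n - α / n * n * (1 : ℝ) ^ (n - 1) = 1 - α := by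
    rw [div_mul_cancel₀ _ hn]
    simp
  rw [h1pow] at hG
  have hcval : (Measure.pi fun _ : Fin n => volume.restrict (Set.Icc (0 : ℝ) 1)) Eᶜ
      = ENNReal.ofReal (1 - α) := by
    rw [hres, Measure.restrict_apply hEm.compl, hcompl, hG]
  have hfin : IsProbabilityMeasure
      (Measure.pi fun _ : Fin n => volume.restrict (Set.Icc (0 : ℝ) 1)) := inferInstance
  have hsum2 : (Measure.pi fun _ : Fin n => volume.restrict (Set.Icc (0 : ℝ) 1)) E
      + (Measure.pi fun _ : Fin n => volume.restrict (Set.Icc (0 : ℝ) 1)) Eᶜ = 1 := by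
    rw [measure_add_measure_compl hEm]
    exact measure_univ
  rw [hcval] at hsum2
  have hadd : ENNReal.ofReal α + ENNReal.ofReal (1 - α) = 1 := by
    rw [← ENNReal.ofReal_add hα0 (by linarith)]
    norm_num
  rw [← hadd] at hsum2
  exact (ENNReal.add_left_inj ENNReal.ofReal_ne_top).mp hsum2
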